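/- Let C be an invertible n×n complex matrix, D an n×n Hermitian positive definite matrix, and suppose 0 ∉ W_D(C). Define cos β := dist(0, W_D(C)) / ‖C‖_D ∈ (0, 1] and sin β := √(1 − cos² β). Let d ∈ ℂⁿ, x⁰ ∈ ℂⁿ, r⁰ := d − C x⁰, and for m ≥ 1 let xᵐ ∈ x⁰ + K^m(C, r⁰) be the minimal-residual iterate, i.e. rᵐ := d − C xᵐ satisfies ‖rᵐ‖_D = min{ ‖d − C x‖_D : x ∈ x⁰ + K^m(C, r⁰) }. Then ‖rᵐ‖_D ≤ (sin β)ᵐ ‖r⁰‖_D. -/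

import Mathlib

open Matrix
open scoped ComplexOrder

/-- The weighted inner product ⟨v, w⟩_E := w* E v on ℂⁿ. -/
noncomputable def ipW {n : ℕ} (E : Matrix (Fin n) (Fin n) ℂ) (v w : Fin n → ℂ) : ℂ :=
  star w ⬝ᵥ (E *ᵥ v)

/-- The E-weighted vector norm ‖v‖_E := (⟨v,v⟩_E)^{1/2}. -/
noncomputable def nW {n : ℕ} (E : Matrix (Fin n) (Fin n) ℂ) (v : Fin n → ℂ) : ℝ :=
  Real.sqrt ((ipW E v v).re)

/-- The operator norm induced by the E-weighted vector norm. -/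
noncomputable def opNW {n : ℕ} (E M : Matrix (Fin n) (Fin n) ℂ) : ℝ :=
  sSup {x : ℝ | ∃ v : Fin n → ℂ, nW E v = 1 ∧ x = nW E (M *ᵥ v)}

/-- The weighted numerical range W_E(C) := { ⟨v, Cv⟩_E : ‖v‖_E = 1 }. -/
noncomputable def numRange {n : ℕ} (E C : Matrix (Fin n) (Fin n) ℂ) : Set ℂ :=
  {z | ∃ v : Fin n → ℂ, ipW E v v = 1 ∧ z = ipW E v (C *ᵥ v)}

/-- The Krylov space K^m(C, r) := span{ C^j r : 0 ≤ j ≤ m−1 }. -/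
noncomputable def krylov {n : ℕ} (C : Matrix (Fin n) (Fin n) ℂ) (r : Fin n → ℂ)
    (m : ℕ) : Submodule ℂ (Fin n → ℂ) :=
  Submodule.span ℂ {w | ∃ j < m, w = (C ^ j) *ᵥ r}

lemma kry_mono {n : ℕ} (C : Matrix (Fin n) (Fin n) ℂ) (r : Fin n → ℂ) (m : ℕ) :
    krylov C r m ≤ krylov C r (m + 1) :=
  Submodule.span_mono (fun w ⟨j, hj, h⟩ => ⟨j, by omega, h⟩)

lemma kry_self {n : ℕ} (C : Matrix (Fin n) (Fin n) ℂ) (r : Fin n → ℂ) {m : ℕ}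
    (hm : 1 ≤ m) : r ∈ krylov C r m :=
  Submodule.subset_span ⟨0, hm, by simp⟩

lemma kry_map {n : ℕ} {C : Matrix (Fin n) (Fin n) ℂ} {r : Fin n → ℂ} {m : ℕ}
    {v : Fin n → ℂ} (h : v ∈ krylov C r m) : C *ᵥ v ∈ krylov C r (m + 1) := by
  have hmap : Submodule.map (Matrix.mulVecLin C) (krylov C r m) ≤ krylov C r (m + 1) := by
    rw [krylov, Submodule.map_span, Submodule.span_le]
    rintro _ ⟨w, ⟨j, hj, rfl⟩, rfl⟩
    exact Submodule.subset_span ⟨j + 1, by omega, by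
      simp [Matrix.mulVecLin_apply, Matrix.mulVec_mulVec, pow_succ']⟩
  simpa [Matrix.mulVecLin_apply] using hmap ⟨v, h, rfl⟩

set_option maxHeartbeats 1000000 in
theorem stmt13 {n : ℕ} (C D : Matrix (Fin n) (Fin n) ℂ)
    (hC : IsUnit C.det) (hD : D.PosDef)
    (h0 : (0 : ℂ) ∉ numRange D C)
    (d x0 : Fin n → ℂ) (x : ℕ → Fin n → ℂ)
    (hx : ∀ m, 1 ≤ m →
      x m - x0 ∈ krylov C (d - C *ᵥ x0) m ∧
        ∀ y : Fin n → ℂ, y - x0 ∈ krylov C (d - C *ᵥ x0) m →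
          nW D (d - C *ᵥ x m) ≤ nW D (d - C *ᵥ y))
    (m : ℕ) (hm : 1 ≤ m) :
    nW D (d - C *ᵥ x m) ≤
      Real.sqrt (1 - (Metric.infDist 0 (numRange D C) / opNW D C) ^ 2) ^ m *
        nW D (d - C *ᵥ x0) := by
  classical
  -- the positive square root of D
  have hB := hD.posSemidef
  open scoped MatrixOrder in
  set B := CFC.sqrt D with hBdef
  open scoped MatrixOrder in
  have hBB : B * B = D := CFC.sqrt_mul_sqrt_self D hB.nonneg
  open scoped MatrixOrder in
  have hBH : Bᴴ = B := (CFC.sqrt_nonneg D).posSemidef.1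
  have hBunit : IsUnit B.det := by
    have hDu : IsUnit D.det := hD.det_pos.ne'.isUnit
    rw [← hBB, Matrix.det_mul] at hDu
    exact isUnit_of_mul_isUnit_left hDu
  have hBinv : B⁻¹ * B = 1 := Matrix.nonsing_inv_mul B hBunit
  -- the isometric embedding into Euclidean space
  set φ : (Fin n → ℂ) → EuclideanSpace ℂ (Fin n) :=
    fun v => (WithLp.equiv 2 (Fin n → ℂ)).symm (B *ᵥ v) with hφdef
  have hφinner : ∀ v w : Fin n → ℂ, (inner ℂ (φ w) (φ v) : ℂ) = ipW D v w := by
    intro v w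
    rw [hφdef]
    rw [WithLp.equiv_symm_apply, EuclideanSpace.inner_toLp_toLp]
    rw [ipW, ← hBB, ← Matrix.mulVec_mulVec, Matrix.star_mulVec, hBH,
      Matrix.dotProduct_mulVec, Matrix.dotProduct_mulVec, dotProduct_comm, Matrix.dotProduct_mulVec]
  have hφnorm : ∀ v : Fin n → ℂ, nW D v = ‖φ v‖ := by
    intro v
    rw [nW, ← hφinner v v, @norm_eq_sqrt_re_inner ℂ]
    rfl
  have hφsmul : ∀ (α : ℂ) (v : Fin n → ℂ), φ (α • v) = α • φ v := by
    intro α v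
    simp [hφdef, Matrix.mulVec_smul, WithLp.toLp_smul]
  have hφsub : ∀ (v w : Fin n → ℂ), φ (v - w) = φ v - φ w := by
    intro v w
    simp [hφdef, Matrix.mulVec_sub, WithLp.toLp_sub]
  have hφzero : φ 0 = 0 := by simp [hφdef, Matrix.mulVec_zero]
  have hφC : ∀ v : Fin n → ℂ, φ (C *ᵥ v) = Matrix.toEuclideanLin (B * C * B⁻¹) (φ v) := by
    intro v
    rw [hφdef]
    simp only [WithLp.equiv_symm_apply, Matrix.toEuclideanLin_toLp, Matrix.toLin'_apply]
    rw [Matrix.mulVec_mulVec, Matrix.mulVec_mulVec, mul_assoc, hBinv, mul_one]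
  have hφne : ∀ v : Fin n → ℂ, v ≠ 0 → φ v ≠ 0 := by
    intro v hv h
    apply hv
    have hBi : Function.Injective B.mulVec :=
      Matrix.mulVec_injective_iff_isUnit.2 ((Matrix.isUnit_iff_isUnit_det B).2 hBunit)
    have h2 : B *ᵥ v = 0 := by
      have := congrArg (WithLp.equiv 2 (Fin n → ℂ)) h
      simpa [hφdef] using this
    exact hBi (show B *ᵥ v = B *ᵥ 0 by simpa [Matrix.mulVec_zero] using h2)
  have hnWpos : ∀ v : Fin n → ℂ, v ≠ 0 → 0 < nW D v := by
    intro v hv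
    rw [hφnorm]
    exact norm_pos_iff.2 (hφne v hv)
  have hnW_smul : ∀ (α : ℂ) (v : Fin n → ℂ), nW D (α • v) = ‖α‖ * nW D v := by
    intro α v
    rw [hφnorm, hφsmul, norm_smul, hφnorm]
  set κ := Metric.infDist 0 (numRange D C) with hκdef
  set K := opNW D C with hKdef
  have hκ0 : 0 ≤ κ := Metric.infDist_nonneg
  -- boundedness of the defining set of the operator norm
  have hbdd : BddAbove {t : ℝ | ∃ v : Fin n → ℂ, nW D v = 1 ∧ t = nW D (C *ᵥ v)} := by
    set L := Matrix.toEuclideanLin (B * C * B⁻¹) with hLdef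
    have hLc : Continuous fun u : EuclideanSpace ℂ (Fin n) => ‖L u‖ :=
      (L.continuous_of_finiteDimensional).norm
    have hcpt := ((isCompact_sphere (0 : EuclideanSpace ℂ (Fin n)) 1).image hLc).bddAbove
    apply hcpt.mono
    rintro _ ⟨v, hv1, rfl⟩
    refine ⟨φ v, ?_, ?_⟩
    · rw [mem_sphere_zero_iff_norm, ← hφnorm]; exact hv1
    · rw [hφnorm, hφC v]
  have hKmem : ∀ v : Fin n → ℂ, nW D v = 1 → nW D (C *ᵥ v) ≤ K :=
    fun v hv => le_csSup hbdd ⟨v, hv, rfl⟩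
  -- unit-vector facts
  have hκle : ∀ v : Fin n → ℂ, nW D v = 1 → κ ≤ ‖ipW D v (C *ᵥ v)‖ := by
    intro v hv
    have hip : ipW D v v = 1 := by
      rw [← hφinner v v, inner_self_eq_norm_sq_to_K, ← hφnorm, hv]
      norm_num
    have hz : ipW D v (C *ᵥ v) ∈ numRange D C := ⟨v, hip, rfl⟩
    have h4 : Metric.infDist (0 : ℂ) (numRange D C) ≤ dist 0 (ipW D v (C *ᵥ v)) :=
      Metric.infDist_le_dist_of_mem hz
    rwa [dist_zero_left] at h4
  -- scaling to unit vectors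
  have hCnorm : ∀ v : Fin n → ℂ, nW D (C *ᵥ v) ≤ K * nW D v := by
    intro v
    by_cases hv : v = 0
    · subst hv
      rw [Matrix.mulVec_zero]
      have h0' : nW D (0 : Fin n → ℂ) = 0 := by rw [hφnorm, hφzero, norm_zero]
      rw [h0', mul_zero]
    · have ha : 0 < nW D v := hnWpos v hv
      have h1 : nW D (((nW D v : ℝ) : ℂ)⁻¹ • v) = 1 := by
        rw [hnW_smul, norm_inv, Complex.norm_real, Real.norm_of_nonneg ha.le,
          inv_mul_cancel₀ ha.ne']
      have h2 := hKmem _ h1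
      rw [Matrix.mulVec_smul, hnW_smul, norm_inv, Complex.norm_real,
        Real.norm_of_nonneg ha.le] at h2
      have h3 : nW D v * ((nW D v)⁻¹ * nW D (C *ᵥ v)) = nW D (C *ᵥ v) := by
        rw [← mul_assoc, mul_inv_cancel₀ ha.ne', one_mul]
      rw [← h3]
      calc nW D v * ((nW D v)⁻¹ * nW D (C *ᵥ v)) ≤ nW D v * K :=
            mul_le_mul_of_nonneg_left h2 ha.le
        _ = K * nW D v := mul_comm _ _
  have hκle' : ∀ v : Fin n → ℂ, v ≠ 0 → κ * (nW D v) ^ 2 ≤ ‖ipW D v (C *ᵥ v)‖ := by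
    intro v hv
    have ha : 0 < nW D v := hnWpos v hv
    set a : ℝ := nW D v with hadef
    have h1 : nW D (((a : ℝ) : ℂ)⁻¹ • v) = 1 := by
      rw [hnW_smul, norm_inv, Complex.norm_real, Real.norm_of_nonneg ha.le, ← hadef,
        inv_mul_cancel₀ ha.ne']
    have h2 := hκle _ h1
    have h3 : ipW D (((a : ℝ) : ℂ)⁻¹ • v) (C *ᵥ (((a : ℝ) : ℂ)⁻¹ • v)) =
        ((a : ℂ))⁻¹ * (starRingEnd ℂ ((a : ℂ))⁻¹) * ipW D v (C *ᵥ v) := by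
      rw [Matrix.mulVec_smul, ← hφinner, hφsmul, hφsmul, inner_smul_left, inner_smul_right,
        hφinner]
      ring
    rw [h3, norm_mul, norm_mul, norm_inv, RCLike.norm_conj, norm_inv, Complex.norm_real,
      Real.norm_of_nonneg ha.le] at h2
    calc κ * a ^ 2 ≤ (a⁻¹ * a⁻¹ * ‖ipW D v (C *ᵥ v)‖) * a ^ 2 := by
          apply mul_le_mul_of_nonneg_right h2 (by positivity)
      _ = ‖ipW D v (C *ᵥ v)‖ := by field_simp
  -- the one-step contraction
  have onestep : ∀ r : Fin n → ℂ, ∃ α : ℂ,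
      nW D (r - α • (C *ᵥ r)) ≤ Real.sqrt (1 - (κ / K) ^ 2) * nW D r := by
    intro r
    by_cases hr : r = 0
    · refine ⟨0, ?_⟩
      subst hr
      have h0' : nW D (0 : Fin n → ℂ) = 0 := by rw [hφnorm, hφzero, norm_zero]
      simp only [zero_smul, sub_zero, h0', mul_zero, le_refl]
    · have ht : C *ᵥ r ≠ 0 := by
        intro h
        have hCi : Function.Injective C.mulVec :=
          Matrix.mulVec_injective_iff_isUnit.2 ((Matrix.isUnit_iff_isUnit_det C).2 hC)
        exact hr (hCi (by simpa [Matrix.mulVec_zero] using h))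
      set R : EuclideanSpace ℂ (Fin n) := φ r with hRdef
      set T : EuclideanSpace ℂ (Fin n) := φ (C *ᵥ r) with hTdef
      have hR0 : 0 < ‖R‖ := norm_pos_iff.2 (hφne r hr)
      have hT0 : 0 < ‖T‖ := norm_pos_iff.2 (hφne _ ht)
      set a : ℂ := ipW D r (C *ᵥ r) with hadef
      have hTR : (inner ℂ T R : ℂ) = a := hφinner r (C *ᵥ r)
      have hTn : ‖T‖ ≤ K * ‖R‖ := by
        have h := hCnorm r
        rw [hφnorm (C *ᵥ r), hφnorm r] at h
        exact h
      have haκ : κ * ‖R‖ ^ 2 ≤ ‖a‖ := by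
        have := hκle' r hr
        rwa [hφnorm r] at this
      have hK0 : 0 < K := by nlinarith
      have hCS : ‖a‖ ≤ ‖T‖ * ‖R‖ := by
        rw [← hTR]; exact norm_inner_le_norm T R
      have hκK : κ ≤ K := by
        refine le_of_mul_le_mul_right ?_ (pow_pos hR0 2)
        nlinarith [mul_le_mul_of_nonneg_right hTn (norm_nonneg R)]
      have h1c : 0 ≤ 1 - (κ / K) ^ 2 := by
        have h4 : κ / K ≤ 1 := (div_le_one hK0).2 hκK
        have h5 : 0 ≤ κ / K := by positivity
        nlinarith
      set α : ℂ := a / ((‖T‖ : ℝ) : ℂ) ^ 2 with hαdef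
      refine ⟨α, ?_⟩
      have hproj : ‖R - α • T‖ ^ 2 = ‖R‖ ^ 2 - ‖a‖ ^ 2 / ‖T‖ ^ 2 := by
        rw [@norm_sub_sq ℂ]
        have e1 : (inner ℂ R (α • T) : ℂ) = ((‖a‖ ^ 2 / ‖T‖ ^ 2 : ℝ) : ℂ) := by
          rw [inner_smul_right, ← inner_conj_symm, hTR, hαdef, div_mul_eq_mul_div,
            Complex.mul_conj, Complex.normSq_eq_norm_sq]
          push_cast
          ring
        rw [e1]
        have e2 : ‖α • T‖ ^ 2 = ‖a‖ ^ 2 / ‖T‖ ^ 2 := by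
          rw [norm_smul, hαdef]
          rw [norm_div, norm_pow, Complex.norm_real, Real.norm_of_nonneg hT0.le]
          field_simp
        rw [e2]
        simp only [RCLike.re_to_complex, Complex.ofReal_re]
        ring
      have hbound : ‖R - α • T‖ ^ 2 ≤ (1 - (κ / K) ^ 2) * ‖R‖ ^ 2 := by
        have h5 : (κ / K) ^ 2 * ‖R‖ ^ 2 * ‖T‖ ^ 2 ≤ ‖a‖ ^ 2 := by
          have e1 : (κ / K) ^ 2 * ‖R‖ ^ 2 * ‖T‖ ^ 2 ≤ (κ / K) ^ 2 * ‖R‖ ^ 2 * (K * ‖R‖) ^ 2 := by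
            nlinarith [mul_le_mul_of_nonneg_left (pow_le_pow_left₀ hT0.le hTn 2)
              (show (0:ℝ) ≤ (κ / K) ^ 2 * ‖R‖ ^ 2 by positivity)]
          have e2 : (κ / K) ^ 2 * ‖R‖ ^ 2 * (K * ‖R‖) ^ 2 = (κ * ‖R‖ ^ 2) ^ 2 := by
            field_simp [hK0.ne']
          have e3 : (κ * ‖R‖ ^ 2) ^ 2 ≤ ‖a‖ ^ 2 := by
            apply pow_le_pow_left₀ (by positivity) haκ
          linarith
        have h6 : (κ / K) ^ 2 * ‖R‖ ^ 2 ≤ ‖a‖ ^ 2 / ‖T‖ ^ 2 :=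
          (le_div_iff₀ (by positivity)).2 h5
        rw [hproj]
        linarith
      have heq : nW D (r - α • (C *ᵥ r)) = ‖R - α • T‖ := by
        rw [hφnorm, hφsub, hφsmul]
      rw [heq, hφnorm r]
      calc ‖R - α • T‖ = Real.sqrt (‖R - α • T‖ ^ 2) := (Real.sqrt_sq (norm_nonneg _)).symm
        _ ≤ Real.sqrt ((1 - (κ / K) ^ 2) * ‖R‖ ^ 2) := Real.sqrt_le_sqrt hbound
        _ = Real.sqrt (1 - (κ / K) ^ 2) * ‖R‖ := by
            rw [Real.sqrt_mul h1c, Real.sqrt_sq (norm_nonneg _)]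
  -- the induction
  set s := Real.sqrt (1 - (κ / K) ^ 2) with hsdef
  have hs0 : 0 ≤ s := Real.sqrt_nonneg _
  set r0 := d - C *ᵥ x0 with hr0def
  have key : ∀ k, 1 ≤ k → nW D (d - C *ᵥ x k) ≤ s ^ k * nW D r0 := by
    intro k hk
    induction k, hk using Nat.le_induction with
    | base =>
      obtain ⟨α, hα⟩ := onestep r0
      have hy : (x0 + α • r0) - x0 ∈ krylov C r0 1 := by
        have e : (x0 + α • r0) - x0 = α • r0 := by abel
        rw [e]
        exact Submodule.smul_mem _ _ (kry_self C r0 le_rfl)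
      have h2 := (hx 1 le_rfl).2 _ hy
      have e2 : d - C *ᵥ (x0 + α • r0) = r0 - α • (C *ᵥ r0) := by
        rw [Matrix.mulVec_add, Matrix.mulVec_smul, hr0def]
        abel
      rw [e2] at h2
      rw [pow_one]
      exact h2.trans hα
    | succ k hk ih =>
      obtain ⟨α, hα⟩ := onestep (d - C *ᵥ x k)
      set rk := d - C *ᵥ x k with hrkdef
      have hxk : x k - x0 ∈ krylov C r0 k := (hx k hk).1
      have hrk : rk ∈ krylov C r0 (k + 1) := by
        have e : rk = r0 - C *ᵥ (x k - x0) := by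
          rw [hrkdef, hr0def, Matrix.mulVec_sub]
          abel
        rw [e]
        exact Submodule.sub_mem _ (kry_self C r0 (by omega)) (kry_map hxk)
      have hy : (x k + α • rk) - x0 ∈ krylov C r0 (k + 1) := by
        have e : (x k + α • rk) - x0 = (x k - x0) + α • rk := by abel
        rw [e]
        exact Submodule.add_mem _ (kry_mono C r0 k hxk) (Submodule.smul_mem _ _ hrk)
      have h2 := (hx (k + 1) (by omega)).2 _ hy
      have e2 : d - C *ᵥ (x k + α • rk) = rk - α • (C *ᵥ rk) := by
        rw [Matrix.mulVec_add, Matrix.mulVec_smul, hrkdef]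
        abel
      rw [e2] at h2
      calc nW D (d - C *ᵥ x (k + 1)) ≤ nW D (rk - α • (C *ᵥ rk)) := h2
        _ ≤ s * nW D rk := hα
        _ ≤ s * (s ^ k * nW D r0) := mul_le_mul_of_nonneg_left ih hs0
        _ = s ^ (k + 1) * nW D r0 := by ring
  exact key m hm
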